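/- In the setting of the adaptive randomization test: if, conditionally on (Y_{1:n}, Z_{1:n}), the resampled vector tilde{X}_{1:n} has the same conditional distribution as X_{1:n} and is conditionally independent of X_{1:n}, then for any test statistic T, the collection T(X, Z, Y), T(tilde{X}^1, Z, Y), ..., T(tilde{X}^B, Z, Y) is exchangeable conditionally on (Y, Z), where tilde{X}^1, ..., tilde{X}^B are i.i.d. copies of the resampling conditional on (Y, Z). -/
import Mathlib


open Finset

open Classical in
/-- Conditionally on `(Y,Z) = b`, if the resamples `tilde X¹, …, tilde X^B`
are i.i.d. draws from the conditional pmf `q b` of `X` given `(Y,Z) = b`, and are conditionally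
independent of `X` (so that the vector `v = (X, tilde X¹, …, tilde X^B)` has conditional joint
pmf `∏ i, q b (v i)`), then for any test statistic `T` the collection
`(T(X,b), T(tilde X¹,b), …, T(tilde X^B,b))` is exchangeable given `(Y,Z) = b`: for every
permutation `σ` and every vector of values `w`, the conditional probability that the
`T`-vector equals `w` is the same as the conditional probability that it equals `w ∘ σ`. -/
theorem resampled_statistics_conditionally_exchangeable
    {α γ : Type*} [Fintype α] (B : ℕ)
    (q : γ → α → ℝ) (hq0 : ∀ b a, 0 ≤ q b a) (hq1 : ∀ b, ∑ a, q b a = 1)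
    (T : α → γ → ℝ) (b : γ) (σ : Equiv.Perm (Fin (B + 1))) (w : Fin (B + 1) → ℝ) :
    (∑ v : Fin (B + 1) → α,
        if (∀ i, T (v i) b = w i) then ∏ i, q b (v i) else 0)
      = ∑ v : Fin (B + 1) → α,
        if (∀ i, T (v i) b = w (σ i)) then ∏ i, q b (v i) else 0 := by
  refine Fintype.sum_equiv (Equiv.arrowCongr σ.symm (Equiv.refl α)) _ _ (fun v => ?_)
  simp only [Equiv.arrowCongr_apply, Equiv.refl_symm, Equiv.coe_refl, Function.comp]
  have h1 : (∀ i, T (v (σ i)) b = w (σ i)) ↔ (∀ i, T (v i) b = w i) :=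
    ⟨fun h i => by simpa using h (σ.symm i), fun h i => h (σ i)⟩
  have h2 : ∏ i, q b (v (σ i)) = ∏ i, q b (v i) :=
    Fintype.prod_equiv σ _ _ (fun i => rfl)
  simp [h1, h2]
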